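/- Fix integers m, n ≥ 1 and i with 1 ≤ i ≤ n, and let p be any nonnegative pricing of the items e₁, …, e_{4i}, h, f₁, …, f_{4i} such that the prices of the items e₁, …, e_{4i−4}, f₁, …, f_{4i−4} sum to exactly 6(2i−2). Then the total payment of the twenty-four basic-gadget customers of x_i, the consistency customer, and the H-customer is at most 2mn² + 6(2i−2) + 42; and equality holds if and only if p(h) = mn² and the quadruples (p(e_{4i−3}), p(e_{4i−2}), p(e_{4i−1}), p(e_{4i})) and (p(f_{4i−3}), p(f_{4i−2}), p(f_{4i−1}), p(f_{4i})) are either both equal to (1, 2, 2, 1) or both equal to (2, 1, 1, 2). -/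
import Mathlib


/-- A single-minded customer with bundle price `x` and budget `B` pays `x` if
`x ≤ B` and `0` otherwise. -/
noncomputable def pay (x B : ℝ) : ℝ := if x ≤ B then x else 0

/-- The profit of a pricing `p` of a quadruple of items from the twelve
basic-gadget customers: single-item customers with budgets `1,2,2,1` and
`2,1,1,2`, two customers of budget `3` on the first and last pairs, and two
customers of budgets `4` and `2` on the middle pair. -/
noncomputable def basicProfit (p : Fin 4 → ℝ) : ℝ :=
  pay (p 0) 1 + pay (p 1) 2 + pay (p 2) 2 + pay (p 3) 1 +
  pay (p 0) 2 + pay (p 1) 1 + pay (p 2) 1 + pay (p 3) 2 +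
  pay (p 0 + p 1) 3 + pay (p 2 + p 3) 3 +
  pay (p 1 + p 2) 4 + pay (p 1 + p 2) 2

lemma pay_le (x B : ℝ) (hB : 0 ≤ B) : pay x B ≤ B := by
  unfold pay; split_ifs with h <;> linarith

lemma single_bound (a : ℝ) (ha : 0 ≤ a) :
    pay a 1 + pay a 2 ≤ 2 ∧ (pay a 1 + pay a 2 = 2 ↔ a = 1 ∨ a = 2) := by
  unfold pay
  split_ifs with h1 h2 h2 <;>
    refine ⟨by linarith, ?_, ?_⟩ <;> intro h <;>
    first
      | (rcases h with h | h <;> linarith)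
      | (first | (left; linarith) | (right; linarith) | linarith)

lemma pair_bound (s : ℝ) : pay s 3 ≤ 3 ∧ (pay s 3 = 3 ↔ s = 3) := by
  unfold pay
  split_ifs with h <;> refine ⟨by linarith, ?_, ?_⟩ <;> intro h' <;> linarith

lemma mid_bound (s : ℝ) (hs : 0 ≤ s) :
    pay s 4 + pay s 2 ≤ 4 ∧ (pay s 4 + pay s 2 = 4 ↔ s = 2 ∨ s = 4) := by
  unfold pay
  split_ifs with h1 h2 h2 <;>
    refine ⟨by linarith, ?_, ?_⟩ <;> intro h <;>
    first
      | (rcases h with h | h <;> linarith)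
      | (first | (left; linarith) | (right; linarith) | linarith)

lemma basic18 (a0 a1 a2 a3 : ℝ) (h0 : 0 ≤ a0) (h1 : 0 ≤ a1) (h2 : 0 ≤ a2)
    (h3 : 0 ≤ a3) :
    basicProfit ![a0, a1, a2, a3] ≤ 18 ∧
      (basicProfit ![a0, a1, a2, a3] = 18 ↔
        (a0 = 1 ∧ a1 = 2 ∧ a2 = 2 ∧ a3 = 1) ∨ (a0 = 2 ∧ a1 = 1 ∧ a2 = 1 ∧ a3 = 2)) := by
  have hB : basicProfit ![a0, a1, a2, a3] =
      (pay a0 1 + pay a0 2) + (pay a1 1 + pay a1 2) + (pay a2 1 + pay a2 2) +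
      (pay a3 1 + pay a3 2) + pay (a0 + a1) 3 + pay (a2 + a3) 3 +
      (pay (a1 + a2) 4 + pay (a1 + a2) 2) := by
    simp only [basicProfit, Matrix.cons_val_zero, Matrix.cons_val_one, Matrix.head_cons,
      Matrix.cons_val_two, Matrix.tail_cons, Matrix.cons_val_three]
    ring
  obtain ⟨s0l, s0e⟩ := single_bound a0 h0
  obtain ⟨s1l, s1e⟩ := single_bound a1 h1
  obtain ⟨s2l, s2e⟩ := single_bound a2 h2
  obtain ⟨s3l, s3e⟩ := single_bound a3 h3
  obtain ⟨pAl, pAe⟩ := pair_bound (a0 + a1)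
  obtain ⟨pBl, pBe⟩ := pair_bound (a2 + a3)
  obtain ⟨mAl, mAe⟩ := mid_bound (a1 + a2) (by linarith)
  rw [hB]
  refine ⟨by linarith, ?_, ?_⟩
  · intro h
    have m1 := s1e.mp (by linarith)
    have m2 := s2e.mp (by linarith)
    have hA := pAe.mp (by linarith)
    have hBB := pBe.mp (by linarith)
    have hM := mAe.mp (by linarith)
    rcases m1 with r1 | r1 <;> rcases m2 with r2 | r2
    · right; exact ⟨by linarith, r1, r2, by linarith⟩
    · exfalso; rcases hM with h' | h' <;> linarith
    · exfalso; rcases hM with h' | h' <;> linarith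
    · left; exact ⟨by linarith, r1, r2, by linarith⟩
  · rintro (⟨e0, e1, e2, e3⟩ | ⟨e0, e1, e2, e3⟩) <;> subst e0 <;> subst e1 <;>
      subst e2 <;> subst e3 <;> norm_num [pay]

lemma core (M S c a0 a1 a2 a3 b0 b1 b2 b3 ph : ℝ)
    (hM : 1 ≤ M) (hS : 0 ≤ S)
    (ha0 : 0 ≤ a0) (ha1 : 0 ≤ a1) (ha2 : 0 ≤ a2) (ha3 : 0 ≤ a3)
    (hb0 : 0 ≤ b0) (hb1 : 0 ≤ b1) (hb2 : 0 ≤ b2) (hb3 : 0 ≤ b3)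
    (hph : 0 ≤ ph) (hc : c = S + a0 + a1 + a2 + ph + b0) :
    basicProfit ![a0, a1, a2, a3] + basicProfit ![b0, b1, b2, b3] +
        pay c (M + S + 6) + pay ph M ≤ 2 * (M) + S + 42 ∧
    (basicProfit ![a0, a1, a2, a3] + basicProfit ![b0, b1, b2, b3] +
          pay c (M + S + 6) + pay ph M = 2 * (M) + S + 42 ↔
      ph = M ∧
        ((a0 = 1 ∧ a1 = 2 ∧ a2 = 2 ∧ a3 = 1 ∧ b0 = 1 ∧ b1 = 2 ∧ b2 = 2 ∧ b3 = 1) ∨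
         (a0 = 2 ∧ a1 = 1 ∧ a2 = 1 ∧ a3 = 2 ∧ b0 = 2 ∧ b1 = 1 ∧ b2 = 1 ∧ b3 = 2))) := by
  obtain ⟨hAl, hAe⟩ := basic18 a0 a1 a2 a3 ha0 ha1 ha2 ha3
  obtain ⟨hBl, hBe⟩ := basic18 b0 b1 b2 b3 hb0 hb1 hb2 hb3
  have hcl : pay c (M + S + 6) ≤ M + S + 6 := pay_le _ _ (by linarith)
  have hhl : pay ph M ≤ M := pay_le _ _ (by linarith)
  refine ⟨by linarith, ?_, ?_⟩
  · intro h
    have eA : basicProfit ![a0, a1, a2, a3] = 18 := by linarith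
    have eB : basicProfit ![b0, b1, b2, b3] = 18 := by linarith
    have ec : pay c (M + S + 6) = M + S + 6 := by linarith
    have eh : pay ph M = M := by linarith
    have hphM : ph = M := by
      unfold pay at eh; split_ifs at eh with h' <;> linarith
    have hcM : c = M + S + 6 := by
      unfold pay at ec; split_ifs at ec with h' <;> linarith
    refine ⟨hphM, ?_⟩
    rcases hAe.mp eA with ⟨e0, e1, e2, e3⟩ | ⟨e0, e1, e2, e3⟩ <;>
      rcases hBe.mp eB with ⟨f0, f1, f2, f3⟩ | ⟨f0, f1, f2, f3⟩
    · exact Or.inl ⟨e0, e1, e2, e3, f0, f1, f2, f3⟩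
    · exfalso; linarith
    · exfalso; linarith
    · exact Or.inr ⟨e0, e1, e2, e3, f0, f1, f2, f3⟩
  · rintro ⟨hphM, ⟨e0, e1, e2, e3, f0, f1, f2, f3⟩ | ⟨e0, e1, e2, e3, f0, f1, f2, f3⟩⟩ <;>
    · have eA : basicProfit ![a0, a1, a2, a3] = 18 := by
        apply hAe.mpr; first | (left; exact ⟨e0, e1, e2, e3⟩) | (right; exact ⟨e0, e1, e2, e3⟩)
      have eB : basicProfit ![b0, b1, b2, b3] = 18 := by
        apply hBe.mpr; first | (left; exact ⟨f0, f1, f2, f3⟩) | (right; exact ⟨f0, f1, f2, f3⟩)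
      have ec : pay c (M + S + 6) = M + S + 6 := by
        unfold pay; rw [if_pos (by linarith)]; linarith
      have eh : pay ph M = M := by
        unfold pay; rw [if_pos (by linarith)]; linarith
      linarith

lemma sum_split3 (g : ℕ → ℝ) (k : ℕ) :
    ∑ x ∈ Finset.Icc 1 (4 * k + 3), g x =
      (∑ x ∈ Finset.Icc 1 (4 * k), g x) + g (4 * k + 1) + g (4 * k + 2) + g (4 * k + 3) := by
  have h3 : 4 * k + 3 = (4 * k + 2) + 1 := by omega
  have h2 : 4 * k + 2 = (4 * k + 1) + 1 := by omega
  have h1 : 4 * k + 1 = (4 * k) + 1 := by omega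
  rw [h3, Finset.sum_Icc_succ_top (by omega), h2, Finset.sum_Icc_succ_top (by omega),
    h1, Finset.sum_Icc_succ_top (by omega)]


lemma sum_split1 (g : ℕ → ℝ) (k : ℕ) :
    ∑ x ∈ Finset.Icc 1 (4 * k + 1), g x =
      (∑ x ∈ Finset.Icc 1 (4 * k), g x) + g (4 * k + 1) := by
  have h1 : 4 * k + 1 = (4 * k) + 1 := by omega
  rw [h1, Finset.sum_Icc_succ_top (by omega)]

/-- Lemma consistency.
Fix `m, n ≥ 1` and `1 ≤ i ≤ n`, and let `p` be a nonnegative pricing of the items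
`e₁, …, e_{4i}, h, f₁, …, f_{4i}` (prices `pe`, `ph`, `pf`) whose prices of
`e₁, …, e_{4i-4}, f₁, …, f_{4i-4}` sum to `6(2i-2)`.  Then the total payment of
the twenty-four basic-gadget customers of `x_i`, the consistency customer (bundle
`{e_{4i-1}, …, e₁, h, f₁, …, f_{4i-3}}`, budget `mn² + 6(2i-2) + 6`) and the
`H`-customer (bundle `{h}`, budget `mn²`) is at most `2mn² + 6(2i-2) + 42`, with
equality iff `p(h) = mn²` and the two quadruples
`(pe_{4i-3}, pe_{4i-2}, pe_{4i-1}, pe_{4i})` and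
`(pf_{4i-3}, pf_{4i-2}, pf_{4i-1}, pf_{4i})` are both `(1,2,2,1)` or both
`(2,1,1,2)`. -/
theorem variable_gadget_consistency
    (m n i : ℕ) (hm : 1 ≤ m) (hn : 1 ≤ n) (hi1 : 1 ≤ i) (hi2 : i ≤ n)
    (pe pf : ℕ → ℝ) (ph : ℝ)
    (hpe : ∀ k, 0 ≤ pe k) (hpf : ∀ k, 0 ≤ pf k) (hph : 0 ≤ ph)
    (hsum : ∑ k ∈ Finset.Icc 1 (4 * i - 4), (pe k + pf k) = 6 * (2 * (i : ℝ) - 2)) :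
    basicProfit ![pe (4 * i - 3), pe (4 * i - 2), pe (4 * i - 1), pe (4 * i)] +
        basicProfit ![pf (4 * i - 3), pf (4 * i - 2), pf (4 * i - 1), pf (4 * i)] +
        pay ((∑ k ∈ Finset.Icc 1 (4 * i - 1), pe k) + ph +
              ∑ k ∈ Finset.Icc 1 (4 * i - 3), pf k)
          ((m : ℝ) * (n : ℝ) ^ 2 + 6 * (2 * (i : ℝ) - 2) + 6) +
        pay ph ((m : ℝ) * (n : ℝ) ^ 2) ≤
      2 * (m : ℝ) * (n : ℝ) ^ 2 + 6 * (2 * (i : ℝ) - 2) + 42 ∧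
    (basicProfit ![pe (4 * i - 3), pe (4 * i - 2), pe (4 * i - 1), pe (4 * i)] +
          basicProfit ![pf (4 * i - 3), pf (4 * i - 2), pf (4 * i - 1), pf (4 * i)] +
          pay ((∑ k ∈ Finset.Icc 1 (4 * i - 1), pe k) + ph +
                ∑ k ∈ Finset.Icc 1 (4 * i - 3), pf k)
            ((m : ℝ) * (n : ℝ) ^ 2 + 6 * (2 * (i : ℝ) - 2) + 6) +
          pay ph ((m : ℝ) * (n : ℝ) ^ 2) =
        2 * (m : ℝ) * (n : ℝ) ^ 2 + 6 * (2 * (i : ℝ) - 2) + 42 ↔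
      ph = (m : ℝ) * (n : ℝ) ^ 2 ∧
        ((pe (4 * i - 3) = 1 ∧ pe (4 * i - 2) = 2 ∧ pe (4 * i - 1) = 2 ∧ pe (4 * i) = 1 ∧
          pf (4 * i - 3) = 1 ∧ pf (4 * i - 2) = 2 ∧ pf (4 * i - 1) = 2 ∧ pf (4 * i) = 1) ∨
         (pe (4 * i - 3) = 2 ∧ pe (4 * i - 2) = 1 ∧ pe (4 * i - 1) = 1 ∧ pe (4 * i) = 2 ∧
          pf (4 * i - 3) = 2 ∧ pf (4 * i - 2) = 1 ∧ pf (4 * i - 1) = 1 ∧ pf (4 * i) = 2))) := by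
  obtain ⟨j, rfl⟩ : ∃ j, i = j + 1 := ⟨i - 1, by omega⟩
  have rw4 : 4 * (j + 1) - 4 = 4 * j := by omega
  have rw3 : 4 * (j + 1) - 3 = 4 * j + 1 := by omega
  have rw2 : 4 * (j + 1) - 2 = 4 * j + 2 := by omega
  have rw1 : 4 * (j + 1) - 1 = 4 * j + 3 := by omega
  have rw0 : 4 * (j + 1) = 4 * j + 4 := by omega
  rw [rw4] at hsum
  rw [rw3, rw2, rw1, rw0]
  rw [show (2 : ℝ) * (m : ℝ) * (n : ℝ) ^ 2 = 2 * ((m : ℝ) * (n : ℝ) ^ 2) from by ring]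
  have hsum' : (∑ k ∈ Finset.Icc 1 (4 * j), pe k) + (∑ k ∈ Finset.Icc 1 (4 * j), pf k)
      = 6 * (2 * ((j : ℝ) + 1) - 2) := by
    rw [← Finset.sum_add_distrib]
    rw [hsum]
    push_cast
    ring
  have harg : (∑ k ∈ Finset.Icc 1 (4 * j + 3), pe k) + ph +
      ∑ k ∈ Finset.Icc 1 (4 * j + 1), pf k =
      6 * (2 * ((j : ℝ) + 1) - 2) + pe (4 * j + 1) + pe (4 * j + 2) + pe (4 * j + 3) +
        ph + pf (4 * j + 1) := by
    rw [sum_split3, sum_split1]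
    linarith
  have hM : (1 : ℝ) ≤ (m : ℝ) * (n : ℝ) ^ 2 := by
    have h1 : (1 : ℝ) ≤ (m : ℝ) := by exact_mod_cast hm
    have h2 : (1 : ℝ) ≤ (n : ℝ) := by exact_mod_cast hn
    nlinarith
  have hS : (0 : ℝ) ≤ 6 * (2 * ((j : ℝ) + 1) - 2) := by
    have : (0 : ℝ) ≤ (j : ℝ) := Nat.cast_nonneg j
    linarith
  have hcast : 6 * (2 * ((j + 1 : ℕ) : ℝ) - 2) = 6 * (2 * ((j : ℝ) + 1) - 2) := by
    push_cast; ring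
  rw [hcast]
  exact core ((m : ℝ) * (n : ℝ) ^ 2) (6 * (2 * ((j : ℝ) + 1) - 2)) _
    (pe (4 * j + 1)) (pe (4 * j + 2)) (pe (4 * j + 3)) (pe (4 * j + 4))
    (pf (4 * j + 1)) (pf (4 * j + 2)) (pf (4 * j + 3)) (pf (4 * j + 4)) ph
    hM hS (hpe _) (hpe _) (hpe _) (hpe _) (hpf _) (hpf _) (hpf _) (hpf _) hph harg
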